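/- Let q be a prime power, let 1 ≤ u < ∞ be a real exponent, and let F : H_1(F_q) → ℂ. Define G : F_q^2 → ℝ by G(x, y) = (∑_{t ∈ F_q} |F(x, y, t)|^u)^{1/u}. Then ‖G‖_{ℓ^u(F_q^2)} = ‖F‖_{ℓ^u(H_1(F_q))}, and for every direction class [v] in the projective line P^1(F_q) one has M_{H1} F([v]) ≤ M_2 G([v]). -/

import Mathlib

/-!
`K` plays the role of the finite field `F_q` with `q = Fintype.card K` elements
(the cardinality of a finite field is automatically a prime power).
The Heisenberg group `H₁(F_q)` is identified with `K × K × K`.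
The projective line `P¹(F_q)` is identified with `Option K`, where `some m`
corresponds to the direction class `[1 : m]` and `none` to `[0 : 1]`
(every class has a unique such normal form).
-/

noncomputable section

open Finset

/-- Representative direction vector of a projective class. -/
def dirVec {K : Type*} [Field K] : Option K → K × K
  | some m => (1, m)
  | none => (0, 1)

/-- The point of the horizontal line through `p = (x₀, y₀, t₀)` with direction
vector `v = (a, b)` corresponding to the parameter `s`, namely
`(x₀ + s a, y₀ + s b, t₀ + s (x₀ b - y₀ a))`. -/
def hPoint {K : Type*} [Field K] (p : K × K × K) (v : K × K) (s : K) : K × K × K :=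
  (p.1 + s * v.1, p.2.1 + s * v.2, p.2.2 + s * (p.1 * v.2 - p.2.1 * v.1))

/-- Sum of `|F|` along the horizontal line through `p` with direction vector `v`. -/
def lineSumH1 {K : Type*} [Field K] [Fintype K] (Fc : K × K × K → ℂ)
    (p : K × K × K) (v : K × K) : ℝ :=
  ∑ s : K, ‖Fc (hPoint p v s)‖

/-- The horizontal Kakeya maximal function `M_{H₁} F` on `P¹(F_q) ≃ Option K`:
the maximum over all base points `p` of the sum of `|F|` along the horizontal
line through `p` in the given direction. -/
def MH1 {K : Type*} [Field K] [Fintype K] (Fc : K × K × K → ℂ) (d : Option K) : ℝ :=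
  Finset.univ.sup' ⟨((0 : K), (0 : K), (0 : K)), Finset.mem_univ _⟩
    fun p => lineSumH1 Fc p (dirVec d)

/-- `ℓ^r` norm of a complex-valued function on a finite set. -/
def lpNormC {X : Type*} [Fintype X] (r : ℝ) (g : X → ℂ) : ℝ :=
  (∑ x, ‖g x‖ ^ r) ^ (1 / r)

/-- `ℓ^r` norm of a real-valued function on a finite set. -/
def lpNormR {X : Type*} [Fintype X] (r : ℝ) (g : X → ℝ) : ℝ :=
  (∑ x, |g x| ^ r) ^ (1 / r)

/-- Sum of `|f|` along the affine line `{w + s v : s ∈ F_q}` in `F_q²`,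
for a real-valued function. -/
def lineSum2R {K : Type*} [Field K] [Fintype K] (f : K × K → ℝ) (w v : K × K) : ℝ :=
  ∑ s : K, |f (w.1 + s * v.1, w.2 + s * v.2)|

/-- The planar Kakeya maximal function `M₂ f` on `P¹(F_q) ≃ Option K`, for a
real-valued function on `F_q²`. -/
def M2R {K : Type*} [Field K] [Fintype K] (f : K × K → ℝ) (d : Option K) : ℝ :=
  Finset.univ.sup' ⟨((0 : K), (0 : K)), Finset.mem_univ _⟩
    fun w => lineSum2R f w (dirVec d)

/-- planar domination lemma.  If `G(x,y) = (∑_t |F(x,y,t)|^u)^{1/u}`,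
then `‖G‖_{ℓ^u(F_q²)} = ‖F‖_{ℓ^u(H₁(F_q))}` and `M_{H₁} F ≤ M₂ G` pointwise on `P¹(F_q)`. -/
theorem stmt_0 {K : Type*} [Field K] [Fintype K] (u : ℝ) (hu : 1 ≤ u)
    (Fc : K × K × K → ℂ) (G : K × K → ℝ)
    (hG : ∀ x y : K, G (x, y) = (∑ t : K, ‖Fc (x, y, t)‖ ^ u) ^ (1 / u)) :
    lpNormR u G = lpNormC u Fc ∧ ∀ d : Option K, MH1 Fc d ≤ M2R G d := by
  have hu0 : u ≠ 0 := by linarith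
  constructor
  · unfold lpNormR lpNormC
    congr 1
    simp only [Fintype.sum_prod_type]
    refine Finset.sum_congr rfl fun x _ => ?_
    refine Finset.sum_congr rfl fun y _ => ?_
    have hSnn : (0:ℝ) ≤ ∑ t : K, ‖Fc (x, y, t)‖ ^ u :=
      Finset.sum_nonneg fun t _ => Real.rpow_nonneg (norm_nonneg _) _
    rw [hG, abs_of_nonneg (Real.rpow_nonneg hSnn _), one_div,
      Real.rpow_inv_rpow hSnn hu0]
  · intro d
    apply Finset.sup'_le
    intro p _
    refine Finset.le_sup'_of_le _ (Finset.mem_univ (p.1, p.2.1)) ?_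
    unfold lineSumH1 lineSum2R hPoint
    refine Finset.sum_le_sum fun s _ => ?_
    set x := p.1 + s * (dirVec d).1
    set y := p.2.1 + s * (dirVec d).2
    have hSnn : (0:ℝ) ≤ ∑ t : K, ‖Fc (x, y, t)‖ ^ u :=
      Finset.sum_nonneg fun t _ => Real.rpow_nonneg (norm_nonneg _) _
    rw [hG, abs_of_nonneg (Real.rpow_nonneg hSnn _)]
    set t := p.2.2 + s * (p.1 * (dirVec d).2 - p.2.1 * (dirVec d).1)
    calc ‖Fc (x, y, t)‖
        = ((‖Fc (x, y, t)‖) ^ u) ^ (1/u) := by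
          rw [one_div, Real.rpow_rpow_inv (norm_nonneg _) hu0]
      _ ≤ (∑ t : K, ‖Fc (x, y, t)‖ ^ u) ^ (1/u) := by
          apply Real.rpow_le_rpow (Real.rpow_nonneg (norm_nonneg _) _)
          · exact Finset.single_le_sum (f := fun t : K => ‖Fc (x, y, t)‖ ^ u) (fun t _ => Real.rpow_nonneg (norm_nonneg _) _) (Finset.mem_univ t)
          · positivity
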